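/- Suppose additionally that V Vᵀ x_n = x_n for all n. Then for every n = 1, …, N, the approximation errors of the Newton-step and infinitesimal-jackknife estimates in the full D-dimensional problem equal those of the restricted R-dimensional problem: |x_nᵀ θ̂_{NS,∖n} − x_nᵀ θ_{∖n}| = |x̃_nᵀ φ̂_{NS,∖n} − x̃_nᵀ φ_{∖n}| and |x_nᵀ θ̂_{IJ,∖n} − x_nᵀ θ_{∖n}| = |x̃_nᵀ φ̂_{IJ,∖n} − x̃_nᵀ φ_{∖n}|. -/

import Mathlib

open Matrix BigOperators RealInnerProductSpace

section Aux

variable {Nn Dn Rn : Type*} [Fintype Nn] [Fintype Dn] [Fintype Rn]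
  [DecidableEq Dn] [DecidableEq Rn]

set_option linter.unusedSectionVars false

lemma my_dot_mulVec (V : Matrix Dn Rn ℝ) (v : Dn → ℝ) (φ : Rn → ℝ) :
    v ⬝ᵥ (V *ᵥ φ) = (Vᵀ *ᵥ v) ⬝ᵥ φ := by
  rw [Matrix.dotProduct_mulVec, ← Matrix.vecMul_transpose, Matrix.transpose_transpose]

lemma my_vecMulVec_mulVec (w : Dn → ℝ) (v u : Rn → ℝ) :
    Matrix.vecMulVec w v *ᵥ u = (v ⬝ᵥ u) • w := by
  ext i
  simp only [Matrix.mulVec, dotProduct, Matrix.vecMulVec_apply, Pi.smul_apply,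
    smul_eq_mul]
  rw [Finset.sum_mul]
  exact Finset.sum_congr rfl fun j _ => by ring

lemma my_sum_mulVec {ι : Type*} (s : Finset ι) (M : ι → Matrix Dn Rn ℝ) (v : Rn → ℝ) :
    (∑ i ∈ s, M i) *ᵥ v = ∑ i ∈ s, (M i *ᵥ v) := by
  induction s using Finset.cons_induction with
  | empty => simp [Matrix.zero_mulVec]
  | cons a s ha ih => rw [Finset.sum_cons, Finset.sum_cons, Matrix.add_mulVec, ih]

lemma my_mulVec_sum {ι : Type*} (s : Finset ι) (M : Matrix Dn Rn ℝ) (v : ι → Rn → ℝ) :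
    M *ᵥ (∑ i ∈ s, v i) = ∑ i ∈ s, (M *ᵥ v i) := by
  induction s using Finset.cons_induction with
  | empty => simp [Matrix.mulVec_zero]
  | cons a s ha ih => rw [Finset.sum_cons, Finset.sum_cons, Matrix.mulVec_add, ih]

lemma my_dotProduct_sum {ι : Type*} (s : Finset ι) (u : Dn → ℝ) (v : ι → Dn → ℝ) :
    u ⬝ᵥ (∑ i ∈ s, v i) = ∑ i ∈ s, u ⬝ᵥ v i := by
  induction s using Finset.cons_induction with
  | empty => simp
  | cons a s ha ih => rw [Finset.sum_cons, Finset.sum_cons, dotProduct_add, ih]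

lemma my_norm_ge (V : Matrix Dn Rn ℝ) (hV : Vᵀ * V = 1) (θ : Dn → ℝ) :
    (Vᵀ *ᵥ θ) ⬝ᵥ (Vᵀ *ᵥ θ) ≤ θ ⬝ᵥ θ := by
  set p := V *ᵥ (Vᵀ *ᵥ θ) with hp
  have h1 : θ ⬝ᵥ p = (Vᵀ *ᵥ θ) ⬝ᵥ (Vᵀ *ᵥ θ) := my_dot_mulVec V θ (Vᵀ *ᵥ θ)
  have h2 : p ⬝ᵥ p = (Vᵀ *ᵥ θ) ⬝ᵥ (Vᵀ *ᵥ θ) := by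
    rw [hp, my_dot_mulVec, Matrix.mulVec_mulVec, hV, Matrix.one_mulVec]
  have h3 : p ⬝ᵥ θ = θ ⬝ᵥ p := dotProduct_comm _ _
  have h4 : 0 ≤ (θ - p) ⬝ᵥ (θ - p) :=
    Finset.sum_nonneg fun i _ => mul_self_nonneg _
  have h5 : (θ - p) ⬝ᵥ (θ - p) = θ ⬝ᵥ θ - θ ⬝ᵥ p - p ⬝ᵥ θ + p ⬝ᵥ p := by
    rw [sub_dotProduct, dotProduct_sub, dotProduct_sub]; ring
  linarith

lemma my_dot_V (V : Matrix Dn Rn ℝ) (hV : Vᵀ * V = 1) (v : Dn → ℝ)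
    (hv : V *ᵥ (Vᵀ *ᵥ v) = v) (θ : Dn → ℝ) :
    v ⬝ᵥ θ = (Vᵀ *ᵥ v) ⬝ᵥ (Vᵀ *ᵥ θ) := by
  conv_lhs => rw [← hv]
  rw [dotProduct_comm, my_dot_mulVec, dotProduct_comm]

lemma my_dot_VV (V : Matrix Dn Rn ℝ) (hV : Vᵀ * V = 1) (v : Dn → ℝ)
    (hv : V *ᵥ (Vᵀ *ᵥ v) = v) (φ : Rn → ℝ) :
    v ⬝ᵥ (V *ᵥ φ) = (Vᵀ *ᵥ v) ⬝ᵥ φ := by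
  rw [my_dot_V V hV v hv, Matrix.mulVec_mulVec, hV, Matrix.one_mulVec]

lemma my_min_transfer (s : Finset Nn) (x : Nn → Dn → ℝ) (y : Nn → ℝ) (c lam : ℝ)
    (hlam : 0 < lam) (f : ℝ → ℝ → ℝ) (V : Matrix Dn Rn ℝ) (hV : Vᵀ * V = 1)
    (hproj : ∀ n, V *ᵥ (Vᵀ *ᵥ x n) = x n) (φs : Rn → ℝ)
    (hφs : ∀ φ, (c * ∑ m ∈ s, f ((Vᵀ *ᵥ x m) ⬝ᵥ φs) (y m) + lam / 2 * (φs ⬝ᵥ φs))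
         ≤ c * ∑ m ∈ s, f ((Vᵀ *ᵥ x m) ⬝ᵥ φ) (y m) + lam / 2 * (φ ⬝ᵥ φ)) :
    ∀ θ, (c * ∑ m ∈ s, f (x m ⬝ᵥ (V *ᵥ φs)) (y m)
            + lam / 2 * ((V *ᵥ φs) ⬝ᵥ (V *ᵥ φs)))
       ≤ c * ∑ m ∈ s, f (x m ⬝ᵥ θ) (y m) + lam / 2 * (θ ⬝ᵥ θ) := by
  intro θ
  have hVV : ∀ (φ : Rn → ℝ), (V *ᵥ φ) ⬝ᵥ (V *ᵥ φ) = φ ⬝ᵥ φ := by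
    intro φ
    rw [my_dot_mulVec, Matrix.mulVec_mulVec, hV, Matrix.one_mulVec]
  have e1 : ∀ m, x m ⬝ᵥ (V *ᵥ φs) = (Vᵀ *ᵥ x m) ⬝ᵥ φs := fun m =>
    my_dot_VV V hV (x m) (hproj m) φs
  have e2 : ∀ m, x m ⬝ᵥ θ = (Vᵀ *ᵥ x m) ⬝ᵥ (Vᵀ *ᵥ θ) := fun m =>
    my_dot_V V hV (x m) (hproj m) θ
  calc c * ∑ m ∈ s, f (x m ⬝ᵥ (V *ᵥ φs)) (y m) + lam / 2 * ((V *ᵥ φs) ⬝ᵥ (V *ᵥ φs))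
      = c * ∑ m ∈ s, f ((Vᵀ *ᵥ x m) ⬝ᵥ φs) (y m) + lam / 2 * (φs ⬝ᵥ φs) := by
        rw [hVV]
        congr 2
        exact Finset.sum_congr rfl fun m _ => by rw [e1 m]
    _ ≤ c * ∑ m ∈ s, f ((Vᵀ *ᵥ x m) ⬝ᵥ (Vᵀ *ᵥ θ)) (y m) + lam / 2 * ((Vᵀ *ᵥ θ) ⬝ᵥ (Vᵀ *ᵥ θ)) :=
        hφs (Vᵀ *ᵥ θ)
    _ ≤ c * ∑ m ∈ s, f (x m ⬝ᵥ θ) (y m) + lam / 2 * (θ ⬝ᵥ θ) := by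
        have := my_norm_ge V hV θ
        have h2 : ∑ m ∈ s, f ((Vᵀ *ᵥ x m) ⬝ᵥ (Vᵀ *ᵥ θ)) (y m) = ∑ m ∈ s, f (x m ⬝ᵥ θ) (y m) :=
          Finset.sum_congr rfl fun m _ => by rw [e2 m]
        rw [h2]
        nlinarith

lemma my_slope_nonneg {g : ℝ → ℝ} (hg : Monotone g) {d z : ℝ} (h : HasDerivAt g d z) :
    0 ≤ d := by
  refine ge_of_tendsto (hasDerivAt_iff_tendsto_slope.mp h) ?_
  filter_upwards [self_mem_nhdsWithin] with w hw
  have hw' : w ≠ z := hw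
  rcases lt_or_gt_of_ne hw' with hlt | hgt
  · have : g w ≤ g z := hg hlt.le
    have hd : w - z < 0 := by linarith
    rw [slope_def_field]
    exact div_nonneg_iff.mpr (Or.inr ⟨by linarith, hd.le⟩)
  · have : g z ≤ g w := hg hgt.le
    have hd : 0 < w - z := by linarith
    rw [slope_def_field]
    exact div_nonneg (by linarith) hd.le

lemma my_deriv2_nonneg {g : ℝ → ℝ} (hc : ConvexOn ℝ Set.univ g) (hs : ContDiff ℝ 2 g)
    (z : ℝ) : 0 ≤ iteratedDeriv 2 g z := by
  have hdg : Differentiable ℝ g := hs.differentiable (by norm_num)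
  have hmon : Monotone (deriv g) := by
    have := hc.monotoneOn_deriv (fun w _ => hdg w)
    intro a b hab
    exact this (Set.mem_univ a) (Set.mem_univ b) hab
  have hs1 : ContDiff ℝ 1 (deriv g) := by
    have h2 : ContDiff ℝ ((1 : WithTop ℕ∞) + 1) g := by
      rw [show ((1 : WithTop ℕ∞) + 1) = 2 by norm_num]
      exact hs
    exact (contDiff_succ_iff_deriv.mp h2).2.2
  have hd1 : DifferentiableAt ℝ (deriv g) z := (hs1.differentiable one_ne_zero) z
  have : iteratedDeriv 2 g z = deriv (deriv g) z := by
    rw [iteratedDeriv_succ, iteratedDeriv_one]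
  rw [this]
  exact my_slope_nonneg hmon hd1.hasDerivAt

lemma my_posdef {ι : Type*} (s : Finset ι) (c : ι → ℝ)
    (hc : ∀ i ∈ s, 0 ≤ c i) (v : ι → Dn → ℝ) (a lam : ℝ) (ha : 0 ≤ a) (hlam : 0 < lam) :
    (a • ∑ i ∈ s, c i • Matrix.vecMulVec (v i) (v i)
      + lam • (1 : Matrix Dn Dn ℝ)).PosDef := by
  have hq : ∀ z : Dn → ℝ,
      (a • ∑ i ∈ s, c i • Matrix.vecMulVec (v i) (v i) + lam • (1 : Matrix Dn Dn ℝ)) *ᵥ z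
        = a • ∑ i ∈ s, (c i * (v i ⬝ᵥ z)) • v i + lam • z := by
    intro z
    rw [Matrix.add_mulVec, Matrix.smul_mulVec, Matrix.smul_mulVec,
      Matrix.one_mulVec, my_sum_mulVec]
    congr 2
    refine Finset.sum_congr rfl fun i _ => ?_
    rw [Matrix.smul_mulVec, my_vecMulVec_mulVec, smul_smul]
  rw [Matrix.posDef_iff_dotProduct_mulVec]
  constructor
  · -- Hermitian
    ext i j
    simp only [Matrix.conjTranspose_apply, Matrix.add_apply, Matrix.smul_apply,
      Matrix.sum_apply, Matrix.vecMulVec_apply, Matrix.one_apply, star_trivial, smul_eq_mul]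
    rw [Finset.sum_congr rfl (fun k _ => by ring :
      ∀ k ∈ s, c k * (v k j * v k i) = c k * (v k i * v k j))]
    by_cases hij : i = j <;> simp [hij, eq_comm]
  · intro z hz
    rw [star_trivial, hq z, dotProduct_add, dotProduct_smul,
      dotProduct_smul, my_dotProduct_sum]
    have hpos : 0 < z ⬝ᵥ z := by
      have h0 : z ⬝ᵥ z ≠ 0 := fun h => hz (dotProduct_self_eq_zero.mp h)
      exact lt_of_le_of_ne (Finset.sum_nonneg fun i _ => mul_self_nonneg (z i)) (Ne.symm h0)
    have hsum : 0 ≤ ∑ i ∈ s, z ⬝ᵥ (c i * (v i ⬝ᵥ z)) • v i := by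
      refine Finset.sum_nonneg fun i hi => ?_
      rw [dotProduct_smul, smul_eq_mul, dotProduct_comm z (v i)]
      nlinarith [hc i hi, mul_self_nonneg (v i ⬝ᵥ z)]
    have h1 : 0 ≤ a * ∑ i ∈ s, z ⬝ᵥ (c i * (v i ⬝ᵥ z)) • v i := mul_nonneg ha hsum
    have h2 : 0 < lam * (z ⬝ᵥ z) := mul_pos hlam hpos
    simp only [smul_eq_mul]
    linarith

lemma my_H_transfer {ι : Type*} (s : Finset ι)
    (d : ι → ℝ) (x : ι → Dn → ℝ) (V : Matrix Dn Rn ℝ) (hV : Vᵀ * V = 1)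
    (hproj : ∀ n, V *ᵥ (Vᵀ *ᵥ x n) = x n) (a lam : ℝ) (w : Rn → ℝ) :
    (a • ∑ m ∈ s, d m • Matrix.vecMulVec (x m) (x m) + lam • (1 : Matrix Dn Dn ℝ)) *ᵥ (V *ᵥ w)
      = V *ᵥ ((a • ∑ m ∈ s, d m • Matrix.vecMulVec (Vᵀ *ᵥ x m) (Vᵀ *ᵥ x m)
          + lam • (1 : Matrix Rn Rn ℝ)) *ᵥ w) := by
  rw [Matrix.add_mulVec, Matrix.add_mulVec, Matrix.smul_mulVec, Matrix.smul_mulVec,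
    Matrix.smul_mulVec, Matrix.smul_mulVec, Matrix.one_mulVec, Matrix.one_mulVec,
    my_sum_mulVec, my_sum_mulVec, Matrix.mulVec_add, Matrix.mulVec_smul, Matrix.mulVec_smul]
  congr 1
  congr 1
  rw [my_mulVec_sum]
  refine Finset.sum_congr rfl fun m _ => ?_
  rw [Matrix.smul_mulVec, Matrix.smul_mulVec, my_vecMulVec_mulVec,
    my_vecMulVec_mulVec, Matrix.mulVec_smul, Matrix.mulVec_smul, hproj m]
  congr 2
  rw [← my_dot_mulVec]

lemma my_mul_inv_cancel (M : Matrix Dn Dn ℝ) (h : IsUnit M.det) (v : Dn → ℝ) :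
    M *ᵥ (M⁻¹ *ᵥ v) = v := by
  rw [Matrix.mulVec_mulVec, Matrix.mul_nonsing_inv _ h, Matrix.one_mulVec]

lemma my_inv_mul_cancel (M : Matrix Dn Dn ℝ) (h : IsUnit M.det) (v : Dn → ℝ) :
    M⁻¹ *ᵥ (M *ᵥ v) = v := by
  rw [Matrix.mulVec_mulVec, Matrix.nonsing_inv_mul _ h, Matrix.one_mulVec]

end Aux

theorem stmt_1
    (N D : ℕ) (hN : 1 ≤ N) (hD : 1 ≤ D)
    (x : Fin N → Fin D → ℝ) (y : Fin N → ℝ)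
    (lam : ℝ) (hlam : 0 < lam)
    (f : ℝ → ℝ → ℝ)
    (hconv : ∀ c : ℝ, ConvexOn ℝ Set.univ (fun z => f z c))
    (hsmooth : ∀ c : ℝ, ContDiff ℝ 2 (fun z => f z c))
    (F : (Fin D → ℝ) → ℝ)
    (hF : F = fun θ => (1 / N : ℝ) * ∑ n, f (x n ⬝ᵥ θ) (y n) + lam / 2 * (θ ⬝ᵥ θ))
    (Floo : Fin N → (Fin D → ℝ) → ℝ)
    (hFloo : ∀ n, Floo n = fun θ =>
      (1 / N : ℝ) * ∑ m ∈ Finset.univ.erase n, f (x m ⬝ᵥ θ) (y m) + lam / 2 * (θ ⬝ᵥ θ))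
    (θhat : Fin D → ℝ)
    (hθhat : ∀ θ, F θhat ≤ F θ)
    (hθhatU : ∀ θ, (∀ θ', F θ ≤ F θ') → θ = θhat)
    (θloo : Fin N → Fin D → ℝ)
    (hθloo : ∀ n θ, Floo n (θloo n) ≤ Floo n θ)
    (hθlooU : ∀ n θ, (∀ θ', Floo n θ ≤ Floo n θ') → θ = θloo n)
    (D1 : Fin N → ℝ)
    (hD1 : ∀ n, D1 n = deriv (fun z => f z (y n)) (x n ⬝ᵥ θhat))
    (D2 : Fin N → ℝ)
    (hD2 : ∀ n, D2 n = iteratedDeriv 2 (fun z => f z (y n)) (x n ⬝ᵥ θhat))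
    (H : Matrix (Fin D) (Fin D) ℝ)
    (hH : H = (1 / N : ℝ) • ∑ m, D2 m • Matrix.vecMulVec (x m) (x m) + lam • 1)
    (Hloo : Fin N → Matrix (Fin D) (Fin D) ℝ)
    (hHloo : ∀ n, Hloo n =
      (1 / N : ℝ) • ∑ m ∈ Finset.univ.erase n, D2 m • Matrix.vecMulVec (x m) (x m) + lam • 1)
    (θIJ : Fin N → Fin D → ℝ)
    (hθIJ : ∀ n, θIJ n = θhat + (D1 n / N) • (H⁻¹ *ᵥ x n))
    (θNS : Fin N → Fin D → ℝ)
    (hθNS : ∀ n, θNS n = θhat + (D1 n / N) • ((Hloo n)⁻¹ *ᵥ x n))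
    (R : ℕ)
    (V : Matrix (Fin D) (Fin R) ℝ) (hV : Vᵀ * V = 1)
    (xt : Fin N → Fin R → ℝ) (hxt : ∀ n, xt n = Vᵀ *ᵥ x n)
    (hproj : ∀ n, V *ᵥ (Vᵀ *ᵥ x n) = x n)
    (FR : (Fin R → ℝ) → ℝ)
    (hFR : FR = fun φ => (1 / N : ℝ) * ∑ n, f (xt n ⬝ᵥ φ) (y n) + lam / 2 * (φ ⬝ᵥ φ))
    (FRloo : Fin N → (Fin R → ℝ) → ℝ)
    (hFRloo : ∀ n, FRloo n = fun φ =>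
      (1 / N : ℝ) * ∑ m ∈ Finset.univ.erase n, f (xt m ⬝ᵥ φ) (y m) + lam / 2 * (φ ⬝ᵥ φ))
    (φhat : Fin R → ℝ)
    (hφhat : ∀ φ, FR φhat ≤ FR φ)
    (hφhatU : ∀ φ, (∀ φ', FR φ ≤ FR φ') → φ = φhat)
    (φloo : Fin N → Fin R → ℝ)
    (hφloo : ∀ n φ, FRloo n (φloo n) ≤ FRloo n φ)
    (hφlooU : ∀ n φ, (∀ φ', FRloo n φ ≤ FRloo n φ') → φ = φloo n)
    (Dt1 : Fin N → ℝ)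
    (hDt1 : ∀ n, Dt1 n = deriv (fun z => f z (y n)) (xt n ⬝ᵥ φhat))
    (Dt2 : Fin N → ℝ)
    (hDt2 : ∀ n, Dt2 n = iteratedDeriv 2 (fun z => f z (y n)) (xt n ⬝ᵥ φhat))
    (HR : Matrix (Fin R) (Fin R) ℝ)
    (hHR : HR = (1 / N : ℝ) • ∑ m, Dt2 m • Matrix.vecMulVec (xt m) (xt m) + lam • 1)
    (HRloo : Fin N → Matrix (Fin R) (Fin R) ℝ)
    (hHRloo : ∀ n, HRloo n =
      (1 / N : ℝ) • ∑ m ∈ Finset.univ.erase n, Dt2 m • Matrix.vecMulVec (xt m) (xt m) + lam • 1)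
    (φIJ : Fin N → Fin R → ℝ)
    (hφIJ : ∀ n, φIJ n = φhat + (Dt1 n / N) • (HR⁻¹ *ᵥ xt n))
    (φNS : Fin N → Fin R → ℝ)
    (hφNS : ∀ n, φNS n = φhat + (Dt1 n / N) • ((HRloo n)⁻¹ *ᵥ xt n))
    :
    ∀ n : Fin N,
      |x n ⬝ᵥ θNS n - x n ⬝ᵥ θloo n| = |xt n ⬝ᵥ φNS n - xt n ⬝ᵥ φloo n| ∧
      |x n ⬝ᵥ θIJ n - x n ⬝ᵥ θloo n| = |xt n ⬝ᵥ φIJ n - xt n ⬝ᵥ φloo n| := by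
  classical
  -- second derivatives are nonnegative
  have hDt2nn : ∀ m, 0 ≤ Dt2 m := fun m => by
    rw [hDt2]; exact my_deriv2_nonneg (hconv (y m)) (hsmooth (y m)) _
  have hD2nn : ∀ m, 0 ≤ D2 m := fun m => by
    rw [hD2]; exact my_deriv2_nonneg (hconv (y m)) (hsmooth (y m)) _
  have hNpos : (0:ℝ) < (N:ℝ) := by exact_mod_cast hN
  have haN : (0:ℝ) ≤ 1 / (N:ℝ) := by positivity
  -- the full minimizers are images of restricted minimizers
  have hVφ : V *ᵥ φhat = θhat := by
    refine hθhatU _ fun θ' => ?_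
    have hmin := my_min_transfer Finset.univ x y (1/(N:ℝ)) lam hlam f V hV hproj φhat
      (fun φ => by
        have := hφhat φ
        rw [hFR] at this
        simpa only [hxt] using this) θ'
    rw [hF]
    exact hmin
  have hVφloo : ∀ n, V *ᵥ φloo n = θloo n := by
    intro n
    refine hθlooU n _ fun θ' => ?_
    have hmin := my_min_transfer (Finset.univ.erase n) x y (1/(N:ℝ)) lam hlam f V hV hproj
      (φloo n)
      (fun φ => by
        have := hφloo n φ
        rw [hFRloo] at this
        simpa only [hxt] using this) θ'
    rw [hFloo]
    exact hmin
  -- evaluation points coincide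
  have hzhat : ∀ n, x n ⬝ᵥ θhat = xt n ⬝ᵥ φhat := fun n => by
    rw [← hVφ, my_dot_mulVec, hxt]
  have hzloo : ∀ n, x n ⬝ᵥ θloo n = xt n ⬝ᵥ φloo n := fun n => by
    rw [← hVφloo, my_dot_mulVec, hxt]
  have hD1eq : ∀ n, D1 n = Dt1 n := fun n => by rw [hD1, hDt1, hzhat]
  have hD2eq : ∀ n, D2 n = Dt2 n := fun n => by rw [hD2, hDt2, hzhat]
  -- positive definiteness of the restricted Hessians
  have hHRpd : HR.PosDef := by
    rw [hHR]
    exact my_posdef Finset.univ Dt2 (fun i _ => hDt2nn i) xt (1/(N:ℝ)) lam haN hlam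
  have hHRloopd : ∀ n, (HRloo n).PosDef := fun n => by
    rw [hHRloo]
    exact my_posdef _ Dt2 (fun i _ => hDt2nn i) xt (1/(N:ℝ)) lam haN hlam
  have hHpd : H.PosDef := by
    rw [hH]
    exact my_posdef Finset.univ D2 (fun i _ => hD2nn i) x (1/(N:ℝ)) lam haN hlam
  have hHloopd : ∀ n, (Hloo n).PosDef := fun n => by
    rw [hHloo]
    exact my_posdef _ D2 (fun i _ => hD2nn i) x (1/(N:ℝ)) lam haN hlam
  -- transfer of the Hessian inverses
  have hHRdet : IsUnit HR.det := hHRpd.det_pos.ne'.isUnit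
  have hHdet : IsUnit H.det := hHpd.det_pos.ne'.isUnit
  have hHRloodet : ∀ n, IsUnit (HRloo n).det := fun n => (hHRloopd n).det_pos.ne'.isUnit
  have hHloodet : ∀ n, IsUnit (Hloo n).det := fun n => (hHloopd n).det_pos.ne'.isUnit
  have hHinv : ∀ n, H⁻¹ *ᵥ x n = V *ᵥ (HR⁻¹ *ᵥ xt n) := by
    intro n
    have h1 : H *ᵥ (V *ᵥ (HR⁻¹ *ᵥ xt n)) = x n := by
      rw [hH, my_H_transfer Finset.univ D2 x V hV hproj (1/(N:ℝ)) lam]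
      have hsum : (1/(N:ℝ)) • ∑ m, D2 m • Matrix.vecMulVec (Vᵀ *ᵥ x m) (Vᵀ *ᵥ x m)
          + lam • (1 : Matrix (Fin R) (Fin R) ℝ) = HR := by
        rw [hHR]
        congr 1
        congr 1
        exact Finset.sum_congr rfl fun m _ => by rw [hD2eq, hxt]
      rw [hsum, my_mul_inv_cancel HR hHRdet, hxt, hproj]
    conv_lhs => rw [← h1]
    rw [my_inv_mul_cancel H hHdet]
  have hHlooinv : ∀ n, (Hloo n)⁻¹ *ᵥ x n = V *ᵥ ((HRloo n)⁻¹ *ᵥ xt n) := by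
    intro n
    have h1 : Hloo n *ᵥ (V *ᵥ ((HRloo n)⁻¹ *ᵥ xt n)) = x n := by
      rw [hHloo, my_H_transfer (Finset.univ.erase n) D2 x V hV hproj (1/(N:ℝ)) lam]
      have hsum : (1/(N:ℝ)) • ∑ m ∈ Finset.univ.erase n,
            D2 m • Matrix.vecMulVec (Vᵀ *ᵥ x m) (Vᵀ *ᵥ x m)
          + lam • (1 : Matrix (Fin R) (Fin R) ℝ) = HRloo n := by
        rw [hHRloo]
        congr 1
        congr 1
        exact Finset.sum_congr rfl fun m _ => by rw [hD2eq, hxt]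
      rw [hsum, my_mul_inv_cancel (HRloo n) (hHRloodet n), hxt, hproj]
    conv_lhs => rw [← h1]
    rw [my_inv_mul_cancel (Hloo n) (hHloodet n)]
  -- the predicted values coincide exactly
  have hNS : ∀ n, x n ⬝ᵥ θNS n = xt n ⬝ᵥ φNS n := by
    intro n
    rw [hθNS, hφNS, dotProduct_add, dotProduct_add, dotProduct_smul,
      dotProduct_smul, hzhat, hD1eq, hHlooinv, my_dot_mulVec, hxt]
  have hIJ : ∀ n, x n ⬝ᵥ θIJ n = xt n ⬝ᵥ φIJ n := by
    intro n
    rw [hθIJ, hφIJ, dotProduct_add, dotProduct_add, dotProduct_smul,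
      dotProduct_smul, hzhat, hD1eq, hHinv, my_dot_mulVec, hxt]
  intro n
  rw [hNS n, hIJ n, hzloo n]
  exact ⟨rfl, rfl⟩
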